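/- Let M(φ, π*) be a Mallows model on permutations of [n] with 0 ≤ φ ≤ 1, and let B = (S_1, …, S_j) be a block structure (an ordered collection of pairwise disjoint subsets of [n]) with ℓ = |S_1| + ⋯ + |S_j|. If π* satisfies B, then the probability that a permutation π drawn from M(φ, π*) satisfies B is at least 1/n^{2ℓ}. -/

import Mathlib

open Finset

/-- Number of inversions of a permutation of `Fin n`. -/
def numInv {n : ℕ} (τ : Equiv.Perm (Fin n)) : ℕ :=
  (Finset.univ.filter fun p : Fin n × Fin n => p.1 < p.2 ∧ τ p.2 < τ p.1).card

/-- Kendall-Tau distance between two permutations of `Fin n`. -/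
def dKT {n : ℕ} (π π' : Equiv.Perm (Fin n)) : ℕ :=
  (Finset.univ.filter fun p : Fin n × Fin n =>
    p.1 < p.2 ∧ ¬((π p.1 < π p.2) ↔ (π' p.1 < π' p.2))).card

/-- The Mallows model probability of `σ`, with scaling parameter `φ` and center `c`. -/
noncomputable def mallows {n : ℕ} (φ : ℝ) (c : Equiv.Perm (Fin n)) (σ : Equiv.Perm (Fin n)) : ℝ :=
  φ ^ dKT c σ / ∑ τ : Equiv.Perm (Fin n), φ ^ dKT c τ

/-- Total variation distance. -/
noncomputable def dTV {n : ℕ} (P Q : Equiv.Perm (Fin n) → ℝ) : ℝ :=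
  (∑ σ : Equiv.Perm (Fin n), |P σ - Q σ|) / 2

/-- A permutation `σ` of `[n]` satisfies the block structure `B = (S_1, …, S_j)` if for
each `i` the elements of `S i` occupy consecutive positions under `σ`, and the blocks
occur in the order `S 0, S 1, …`. -/
def satisfiesBlock {n j : ℕ} (σ : Equiv.Perm (Fin n)) (S : Fin j → Finset (Fin n)) :
    Prop :=
  ∃ a : Fin j → ℕ,
    (∀ i, (S i).image (fun x => ((σ x : ℕ))) = Finset.Ico (a i) (a i + (S i).card)) ∧
    (∀ i₁ i₂ : Fin j, i₁ < i₂ → a i₁ + (S i₁).card ≤ a i₂)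

open scoped Classical

lemma digit_lt {q X Y C D : ℕ} (hC : C < q) (hXY : X < Y) :
    X * q + C < Y * q + D := by
  calc X * q + C < X * q + q := by omega
  _ = (X+1) * q := by ring
  _ ≤ Y * q := Nat.mul_le_mul_right q hXY
  _ ≤ Y * q + D := by omega

lemma digits_eq {q A B A' B' : ℕ} (hB : B < q) (hB' : B' < q)
    (h : A * q + B = A' * q + B') : A = A' ∧ B = B' := by
  have hA : A = A' := by
    rcases lt_trichotomy A A' with h1 | h1 | h1
    · exact absurd h (Nat.ne_of_lt (digit_lt hB h1))
    · exact h1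
    · exact absurd h.symm (Nat.ne_of_lt (digit_lt hB' h1))
  subst hA; exact ⟨rfl, by omega⟩

section Dev

variable {n j : ℕ} (πstar : Equiv.Perm (Fin n)) (S : Fin j → Finset (Fin n)) (a : Fin j → ℕ)

/-- The set of all block elements. -/
noncomputable def Lset : Finset (Fin n) := Finset.univ.biUnion S

/-- The non-block elements. -/
noncomputable def NL : Finset (Fin n) := Finset.univ.filter (fun x => x ∉ Lset S)

noncomputable def rnk (τ : Equiv.Perm (Fin n)) (x : Fin n) : ℕ :=
  ((NL S).filter (fun z => τ z < τ x)).card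

noncomputable def Bset (i : Fin j) : Finset (Fin n) :=
  (NL S).filter (fun y => (πstar y : ℕ) < a i)

noncomputable def Cset (τ : Equiv.Perm (Fin n)) (k : ℕ) : Finset (Fin n) :=
  (NL S).filter (fun y => rnk S τ y < k)

noncomputable def mm (τ : Equiv.Perm (Fin n)) (i : Fin j) (k : ℕ) : ℕ :=
  ((Cset S τ k) \ (Bset πstar S a i)).card + ((Bset πstar S a i) \ (Cset S τ k)).card

noncomputable def kk (τ : Equiv.Perm (Fin n)) (i : Fin j) : ℕ :=
  Nat.findGreatest (fun k => ∀ k' ≤ (NL S).card, mm πstar S a τ i k ≤ mm πstar S a τ i k') (NL S).card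

lemma mem_Lset {x : Fin n} : x ∈ Lset S ↔ ∃ i, x ∈ S i := by
  simp [Lset]

lemma mem_NL {x : Fin n} : x ∈ NL S ↔ x ∉ Lset S := by
  simp [NL]

lemma block_subset_Lset {i : Fin j} : S i ⊆ Lset S := fun x hx => (mem_Lset S).2 ⟨i, hx⟩

variable {S}

lemma rnk_le {τ : Equiv.Perm (Fin n)} {x : Fin n} : rnk S τ x ≤ (NL S).card :=
  Finset.card_le_card (filter_subset _ _)

lemma rnk_lt {τ : Equiv.Perm (Fin n)} {y : Fin n} (hy : y ∈ NL S) :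
    rnk S τ y < (NL S).card := by
  apply Finset.card_lt_card
  refine ⟨filter_subset _ _, fun hsub => ?_⟩
  have := hsub hy
  simp at this

lemma rnk_lt_rnk_iff {τ : Equiv.Perm (Fin n)} {y x : Fin n} (hy : y ∈ NL S) :
    rnk S τ y < rnk S τ x ↔ τ y < τ x := by
  constructor
  · intro h
    by_contra hc
    push_neg at hc
    have hsub : (NL S).filter (fun z => τ z < τ x) ⊆ (NL S).filter (fun z => τ z < τ y) := by
      intro z hz
      rw [mem_filter] at hz ⊢
      exact ⟨hz.1, lt_of_lt_of_le hz.2 hc⟩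
    have hle : rnk S τ x ≤ rnk S τ y := Finset.card_le_card hsub
    omega
  · intro h
    apply Finset.card_lt_card
    constructor
    · intro z hz
      rw [mem_filter] at hz ⊢
      exact ⟨hz.1, lt_trans hz.2 h⟩
    · intro hsub
      have : y ∈ (NL S).filter (fun z => τ z < τ x) := mem_filter.2 ⟨hy, h⟩
      have := hsub this
      simp at this

lemma mem_Cset {τ : Equiv.Perm (Fin n)} {y : Fin n} {k : ℕ} :
    y ∈ Cset S τ k ↔ y ∈ NL S ∧ rnk S τ y < k := by
  simp [Cset]

lemma mem_Cset_rnk {τ : Equiv.Perm (Fin n)} {y x : Fin n} (hy : y ∈ NL S) :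
    y ∈ Cset S τ (rnk S τ x) ↔ τ y < τ x := by
  rw [mem_Cset]
  exact ⟨fun h => (rnk_lt_rnk_iff hy).1 h.2, fun h => ⟨hy, (rnk_lt_rnk_iff hy).2 h⟩⟩

variable {πstar a}

lemma kk_le {τ : Equiv.Perm (Fin n)} {i : Fin j} : kk πstar S a τ i ≤ (NL S).card :=
  Nat.findGreatest_le _

lemma kk_spec {τ : Equiv.Perm (Fin n)} {i : Fin j} :
    ∀ k' ≤ (NL S).card, mm πstar S a τ i (kk πstar S a τ i) ≤ mm πstar S a τ i k' := by
  obtain ⟨k, hk, hmin⟩ := Finset.exists_min_image (Finset.range ((NL S).card + 1))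
    (fun k => mm πstar S a τ i k) ⟨0, by simp⟩
  have hP : ∀ k' ≤ (NL S).card, mm πstar S a τ i k ≤ mm πstar S a τ i k' := by
    intro k' hk'
    exact hmin k' (Finset.mem_range.2 (by omega))
  have hkle : k ≤ (NL S).card := by
    have := Finset.mem_range.1 hk; omega
  exact Nat.findGreatest_spec
    (P := fun k => ∀ k' ≤ (NL S).card, mm πstar S a τ i k ≤ mm πstar S a τ i k') hkle hP

lemma kk_greatest {τ : Equiv.Perm (Fin n)} {i : Fin j} {k : ℕ} (hk : k ≤ (NL S).card)
    (h : ∀ k' ≤ (NL S).card, mm πstar S a τ i k ≤ mm πstar S a τ i k') :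
    k ≤ kk πstar S a τ i :=
  Nat.le_findGreatest hk h

end Dev

section Dev2

variable {n j : ℕ} {πstar : Equiv.Perm (Fin n)} {S : Fin j → Finset (Fin n)} {a : Fin j → ℕ}

lemma Bset_mono (ha2 : ∀ i₁ i₂ : Fin j, i₁ < i₂ → a i₁ + (S i₁).card ≤ a i₂)
    {i i' : Fin j} (h : i ≤ i') : Bset πstar S a i ⊆ Bset πstar S a i' := by
  rcases eq_or_lt_of_le h with h | h
  · rw [h]
  · intro y hy
    rw [Bset, mem_filter] at hy ⊢
    have := ha2 i i' h
    exact ⟨hy.1, by omega⟩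

lemma Cset_mono {τ : Equiv.Perm (Fin n)} {k k' : ℕ} (h : k ≤ k') :
    Cset S τ k ⊆ Cset S τ k' := by
  intro y hy
  rw [mem_Cset] at hy ⊢
  exact ⟨hy.1, by omega⟩

/-- The walk identity: for `k' ≤ k`,
`mm k + |D ∩ B| = mm k' + |D \ B|` where `D = C k \ C k'`. -/
lemma mm_identity {τ : Equiv.Perm (Fin n)} {i : Fin j} {k k' : ℕ} (h : k' ≤ k) :
    mm πstar S a τ i k + ((Cset S τ k \ Cset S τ k') ∩ Bset πstar S a i).card =
    mm πstar S a τ i k' + ((Cset S τ k \ Cset S τ k') \ Bset πstar S a i).card := by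
  have hsub : Cset S τ k' ⊆ Cset S τ k := Cset_mono h
  have e1 : (Cset S τ k \ Bset πstar S a i).card =
      (Cset S τ k' \ Bset πstar S a i).card +
      (((Cset S τ k \ Cset S τ k')) \ Bset πstar S a i).card := by
    rw [← Finset.card_union_of_disjoint]
    · congr 1
      ext y
      simp only [mem_sdiff, mem_union]
      constructor
      · intro ⟨h1, h2⟩
        by_cases hy : y ∈ Cset S τ k'
        · exact Or.inl ⟨hy, h2⟩
        · exact Or.inr ⟨⟨h1, hy⟩, h2⟩
      · rintro (⟨h1, h2⟩ | ⟨⟨h1, _⟩, h2⟩)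
        · exact ⟨hsub h1, h2⟩
        · exact ⟨h1, h2⟩
    · apply Finset.disjoint_left.2
      intro y hy hy'
      simp only [mem_sdiff] at hy hy'
      exact hy'.1.2 hy.1
  have e2 : (Bset πstar S a i \ Cset S τ k').card =
      (Bset πstar S a i \ Cset S τ k).card +
      ((Cset S τ k \ Cset S τ k') ∩ Bset πstar S a i).card := by
    rw [← Finset.card_union_of_disjoint]
    · congr 1
      ext y
      simp only [mem_sdiff, mem_union, mem_inter]
      constructor
      · intro ⟨h1, h2⟩
        by_cases hy : y ∈ Cset S τ k
        · exact Or.inr ⟨⟨hy, h2⟩, h1⟩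
        · exact Or.inl ⟨h1, hy⟩
      · rintro (⟨h1, h2⟩ | ⟨⟨h1, h2⟩, h3⟩)
        · exact ⟨h1, fun hc => h2 (hsub hc)⟩
        · exact ⟨h3, h2⟩
    · apply Finset.disjoint_left.2
      intro y hy hy'
      simp only [mem_sdiff, mem_inter] at hy hy'
      exact hy.2 hy'.1.1
  simp only [mm]
  omega

lemma kk_mono (ha2 : ∀ i₁ i₂ : Fin j, i₁ < i₂ → a i₁ + (S i₁).card ≤ a i₂)
    {τ : Equiv.Perm (Fin n)} {i i' : Fin j} (h : i ≤ i') :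
    kk πstar S a τ i ≤ kk πstar S a τ i' := by
  by_contra hc
  push_neg at hc
  have hk'k : kk πstar S a τ i' ≤ kk πstar S a τ i := le_of_lt hc
  have hBmono := Bset_mono (πstar := πstar) ha2 h
  have id1 := mm_identity (πstar := πstar) (S := S) (a := a) (τ := τ) (i := i) hk'k
  have id2 := mm_identity (πstar := πstar) (S := S) (a := a) (τ := τ) (i := i') hk'k
  have hmin1 : mm πstar S a τ i (kk πstar S a τ i) ≤ mm πstar S a τ i (kk πstar S a τ i') :=
    kk_spec _ kk_le
  have h1 : ((Cset S τ (kk πstar S a τ i) \ Cset S τ (kk πstar S a τ i')) \ Bset πstar S a i').card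
      ≤ ((Cset S τ (kk πstar S a τ i) \ Cset S τ (kk πstar S a τ i')) \ Bset πstar S a i).card :=
    Finset.card_le_card (fun y hy => by
      simp only [mem_sdiff] at hy ⊢
      exact ⟨hy.1, fun hc' => hy.2 (hBmono hc')⟩)
  have h2 : ((Cset S τ (kk πstar S a τ i) \ Cset S τ (kk πstar S a τ i')) ∩ Bset πstar S a i).card
      ≤ ((Cset S τ (kk πstar S a τ i) \ Cset S τ (kk πstar S a τ i')) ∩ Bset πstar S a i').card :=
    Finset.card_le_card (fun y hy => by
      simp only [mem_inter] at hy ⊢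
      exact ⟨hy.1, hBmono hy.2⟩)
  have hle : mm πstar S a τ i' (kk πstar S a τ i) ≤ mm πstar S a τ i' (kk πstar S a τ i') := by
    omega
  have hmin' : ∀ k'' ≤ (NL S).card, mm πstar S a τ i' (kk πstar S a τ i) ≤ mm πstar S a τ i' k'' := by
    intro k'' hk''
    exact le_trans hle (kk_spec k'' hk'')
  have : kk πstar S a τ i ≤ kk πstar S a τ i' := kk_greatest kk_le hmin'
  omega

end Dev2

def MMc (n j : ℕ) : ℕ := n + j + 2

section Dev3

variable {n j : ℕ} (πstar : Equiv.Perm (Fin n)) (S : Fin j → Finset (Fin n)) (a : Fin j → ℕ)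

noncomputable def key (τ : Equiv.Perm (Fin n)) (x : Fin n) : ℕ :=
  if h : ∃ i, x ∈ S i then
    kk πstar S a τ h.choose * (MMc n j)^2 + ((h.choose : ℕ)+1) * MMc n j + (πstar x : ℕ)
  else rnk S τ x * (MMc n j)^2 + (MMc n j - 1) * MMc n j

variable {πstar S a}

lemma key_block (hdisj : ∀ i₁ i₂ : Fin j, i₁ ≠ i₂ → Disjoint (S i₁) (S i₂))
    {τ : Equiv.Perm (Fin n)} {x : Fin n} {i : Fin j} (hx : x ∈ S i) :
    key πstar S a τ x =
      kk πstar S a τ i * (MMc n j)^2 + ((i : ℕ)+1) * MMc n j + (πstar x : ℕ) := by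
  have h : ∃ i', x ∈ S i' := ⟨i, hx⟩
  rw [key, dif_pos h]
  have : h.choose = i := by
    by_contra hne
    exact Finset.disjoint_left.1 (hdisj _ _ hne) h.choose_spec hx
  rw [this]

lemma key_nl {τ : Equiv.Perm (Fin n)} {y : Fin n} (hy : y ∈ NL S) :
    key πstar S a τ y = rnk S τ y * (MMc n j)^2 + (MMc n j - 1) * MMc n j := by
  rw [key, dif_neg]
  rw [mem_NL, mem_Lset] at hy
  exact hy

/-- Arithmetic: the "within-decade" part of a block key is below the decade width. -/
lemma block_tail_lt {i : Fin j} {x : Fin n} :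
    ((i : ℕ)+1) * MMc n j + (πstar x : ℕ) < (MMc n j)^2 := by
  have h1 : (i : ℕ) < j := i.isLt
  have h2 : (πstar x : ℕ) < n := (πstar x).isLt
  have h3 : (i : ℕ) + 2 ≤ MMc n j := by simp only [MMc]; omega
  calc ((i : ℕ)+1) * MMc n j + (πstar x : ℕ)
      < ((i : ℕ)+1) * MMc n j + MMc n j := by simp only [MMc]; omega
    _ = ((i : ℕ)+2) * MMc n j := by ring
    _ ≤ MMc n j * MMc n j := Nat.mul_le_mul_right _ h3
    _ = (MMc n j)^2 := by ring

lemma nl_tail_lt : (MMc n j - 1) * MMc n j + 0 < (MMc n j)^2 := by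
  have h3 : MMc n j - 1 < MMc n j := by simp only [MMc]; omega
  calc (MMc n j - 1) * MMc n j + 0 = (MMc n j - 1) * MMc n j := by ring
    _ < MMc n j * MMc n j := by
        have hpos : 0 < MMc n j := by simp only [MMc]; omega
        exact (Nat.mul_lt_mul_right hpos).mpr h3
    _ = (MMc n j)^2 := by ring

lemma block_tail_lt_nl_tail {i : Fin j} {x : Fin n} :
    ((i : ℕ)+1) * MMc n j + (πstar x : ℕ) < (MMc n j - 1) * MMc n j := by
  have h1 : (i : ℕ) < j := i.isLt
  have h2 : (πstar x : ℕ) < n := (πstar x).isLt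
  have h3 : (i : ℕ) + 2 ≤ MMc n j - 1 := by simp only [MMc]; omega
  calc ((i : ℕ)+1) * MMc n j + (πstar x : ℕ)
      < ((i : ℕ)+1) * MMc n j + MMc n j := by simp only [MMc]; omega
    _ = ((i : ℕ)+2) * MMc n j := by ring
    _ ≤ (MMc n j - 1) * MMc n j := Nat.mul_le_mul_right _ h3

lemma key_lt_mixed_of (hdisj : ∀ i₁ i₂ : Fin j, i₁ ≠ i₂ → Disjoint (S i₁) (S i₂))
    {τ : Equiv.Perm (Fin n)} {x y : Fin n} {i : Fin j} (hx : x ∈ S i) (hy : y ∈ NL S)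
    (h : kk πstar S a τ i ≤ rnk S τ y) :
    key πstar S a τ x < key πstar S a τ y := by
  rw [key_block hdisj hx, key_nl hy]
  rcases eq_or_lt_of_le h with h | h
  · rw [← h]
    have := block_tail_lt_nl_tail (πstar := πstar) (i := i) (x := x)
    omega
  · rw [add_assoc]
    exact digit_lt (block_tail_lt (πstar := πstar)) h

lemma key_lt_mixed_of' (hdisj : ∀ i₁ i₂ : Fin j, i₁ ≠ i₂ → Disjoint (S i₁) (S i₂))
    {τ : Equiv.Perm (Fin n)} {x y : Fin n} {i : Fin j} (hx : x ∈ S i) (hy : y ∈ NL S)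
    (h : rnk S τ y < kk πstar S a τ i) :
    key πstar S a τ y < key πstar S a τ x := by
  rw [key_block hdisj hx, key_nl hy]
  rw [add_assoc]
  exact digit_lt (by simpa using nl_tail_lt (n := n) (j := j)) h

lemma key_lt_mixed_iff (hdisj : ∀ i₁ i₂ : Fin j, i₁ ≠ i₂ → Disjoint (S i₁) (S i₂))
    {τ : Equiv.Perm (Fin n)} {x y : Fin n} {i : Fin j} (hx : x ∈ S i) (hy : y ∈ NL S) :
    key πstar S a τ x < key πstar S a τ y ↔ kk πstar S a τ i ≤ rnk S τ y := by
  constructor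
  · intro h
    by_contra hc
    push_neg at hc
    exact absurd (lt_trans h (key_lt_mixed_of' hdisj hx hy hc)) (lt_irrefl _)
  · exact key_lt_mixed_of hdisj hx hy

lemma key_lt_nl_iff {τ : Equiv.Perm (Fin n)} {y y' : Fin n}
    (hy : y ∈ NL S) (hy' : y' ∈ NL S) :
    key πstar S a τ y < key πstar S a τ y' ↔ τ y < τ y' := by
  rw [key_nl hy, key_nl hy', ← rnk_lt_rnk_iff (τ := τ) hy]
  constructor
  · intro h
    by_contra hc
    push_neg at hc
    have := Nat.mul_le_mul_right ((MMc n j)^2) hc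
    omega
  · intro h
    have h1 : rnk S τ y + 1 ≤ rnk S τ y' := h
    have h2 := Nat.mul_le_mul_right ((MMc n j)^2) h1
    have e : (rnk S τ y + 1) * (MMc n j)^2 = rnk S τ y * (MMc n j)^2 + (MMc n j)^2 := by ring
    have hsq : 0 < (MMc n j)^2 := by simp only [MMc]; positivity
    omega

end Dev3

section Dev4

variable {n j : ℕ} {πstar : Equiv.Perm (Fin n)} {S : Fin j → Finset (Fin n)} {a : Fin j → ℕ}

lemma pistar_mem_Ico
    (ha1 : ∀ i, (S i).image (fun x => ((πstar x : ℕ))) = Finset.Ico (a i) (a i + (S i).card))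
    {i : Fin j} {x : Fin n} (hx : x ∈ S i) :
    a i ≤ (πstar x : ℕ) ∧ (πstar x : ℕ) < a i + (S i).card := by
  have : (πstar x : ℕ) ∈ Finset.Ico (a i) (a i + (S i).card) := by
    rw [← ha1 i]
    exact Finset.mem_image_of_mem _ hx
  rw [Finset.mem_Ico] at this
  exact this

lemma pistar_nl
    (ha1 : ∀ i, (S i).image (fun x => ((πstar x : ℕ))) = Finset.Ico (a i) (a i + (S i).card))
    {y : Fin n} (hy : y ∈ NL S) (i : Fin j) :
    (πstar y : ℕ) < a i ∨ a i + (S i).card ≤ (πstar y : ℕ) := by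
  by_contra hc
  push_neg at hc
  have hmem : (πstar y : ℕ) ∈ Finset.Ico (a i) (a i + (S i).card) :=
    Finset.mem_Ico.2 ⟨hc.1, hc.2⟩
  rw [← ha1 i, Finset.mem_image] at hmem
  obtain ⟨x, hxS, hxe⟩ := hmem
  have : x = y := πstar.injective (Fin.val_injective hxe)
  subst this
  rw [mem_NL] at hy
  exact hy (block_subset_Lset S hxS)

lemma pi_lt_iff_Bset
    (ha1 : ∀ i, (S i).image (fun x => ((πstar x : ℕ))) = Finset.Ico (a i) (a i + (S i).card))
    {i : Fin j} {x y : Fin n} (hx : x ∈ S i) (hy : y ∈ NL S) :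
    πstar y < πstar x ↔ y ∈ Bset πstar S a i := by
  have h1 := pistar_mem_Ico ha1 hx
  have h2 := pistar_nl ha1 hy i
  rw [Bset, mem_filter, Fin.lt_def]
  constructor
  · intro h
    refine ⟨hy, ?_⟩
    omega
  · intro ⟨_, h⟩
    omega

lemma pistar_block_lt
    (ha1 : ∀ i, (S i).image (fun x => ((πstar x : ℕ))) = Finset.Ico (a i) (a i + (S i).card))
    (ha2 : ∀ i₁ i₂ : Fin j, i₁ < i₂ → a i₁ + (S i₁).card ≤ a i₂)
    {i i' : Fin j} {x x' : Fin n} (hx : x ∈ S i) (hx' : x' ∈ S i') (h : i < i') :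
    πstar x < πstar x' := by
  have h1 := pistar_mem_Ico ha1 hx
  have h2 := pistar_mem_Ico ha1 hx'
  have h3 := ha2 i i' h
  rw [Fin.lt_def]
  omega

lemma key_lt_LL_of (hdisj : ∀ i₁ i₂ : Fin j, i₁ ≠ i₂ → Disjoint (S i₁) (S i₂))
    (ha2 : ∀ i₁ i₂ : Fin j, i₁ < i₂ → a i₁ + (S i₁).card ≤ a i₂)
    {τ : Equiv.Perm (Fin n)} {i i' : Fin j} {x x' : Fin n}
    (hx : x ∈ S i) (hx' : x' ∈ S i') (h : i < i') :
    key πstar S a τ x < key πstar S a τ x' := by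
  rw [key_block hdisj hx, key_block hdisj hx']
  have hkk : kk πstar S a τ i ≤ kk πstar S a τ i' := kk_mono ha2 (le_of_lt h)
  rcases eq_or_lt_of_le hkk with he | hlt
  · rw [he]
    have hii : (i : ℕ) < (i' : ℕ) := h
    have hpx : (πstar x : ℕ) < MMc n j := by
      have := (πstar x).isLt; simp only [MMc]; omega
    have h1 : ((i : ℕ)+1) * MMc n j + (πstar x : ℕ) < ((i' : ℕ)+1) * MMc n j + (πstar x' : ℕ) :=
      digit_lt hpx (by omega)
    omega
  · rw [add_assoc, add_assoc]
    exact digit_lt (block_tail_lt (πstar := πstar)) hlt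

lemma key_lt_LL_iff (hdisj : ∀ i₁ i₂ : Fin j, i₁ ≠ i₂ → Disjoint (S i₁) (S i₂))
    (ha1 : ∀ i, (S i).image (fun x => ((πstar x : ℕ))) = Finset.Ico (a i) (a i + (S i).card))
    (ha2 : ∀ i₁ i₂ : Fin j, i₁ < i₂ → a i₁ + (S i₁).card ≤ a i₂)
    {τ : Equiv.Perm (Fin n)} {i i' : Fin j} {x x' : Fin n}
    (hx : x ∈ S i) (hx' : x' ∈ S i') :
    key πstar S a τ x < key πstar S a τ x' ↔ πstar x < πstar x' := by
  rcases lt_trichotomy i i' with hii | hii | hii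
  · simp only [key_lt_LL_of (τ := τ) (πstar := πstar) hdisj ha2 hx hx' hii,
      pistar_block_lt ha1 ha2 hx hx' hii]
  · subst hii
    rw [key_block hdisj hx, key_block hdisj hx', Fin.lt_def]
    omega
  · have k1 := key_lt_LL_of (τ := τ) (πstar := πstar) hdisj ha2 hx' hx hii
    have k2 := pistar_block_lt ha1 ha2 hx' hx hii
    constructor
    · intro hk; exact absurd (lt_trans hk k1) (lt_irrefl _)
    · intro hk; exact absurd (lt_trans hk k2) (lt_irrefl _)

lemma key_inj (hdisj : ∀ i₁ i₂ : Fin j, i₁ ≠ i₂ → Disjoint (S i₁) (S i₂))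
    {τ : Equiv.Perm (Fin n)} {x y : Fin n}
    (h : key πstar S a τ x = key πstar S a τ y) : x = y := by
  have hM2 : 0 < MMc n j := by simp only [MMc]; omega
  by_cases hx : ∃ i, x ∈ S i <;> by_cases hy' : ∃ i, y ∈ S i
  · obtain ⟨i, hxi⟩ := hx
    obtain ⟨i', hyi⟩ := hy'
    rw [key_block hdisj hxi, key_block hdisj hyi] at h
    rw [add_assoc, add_assoc] at h
    obtain ⟨h1, h2⟩ := digits_eq (block_tail_lt (πstar := πstar))
      (block_tail_lt (πstar := πstar)) h
    have hpi : (πstar x : ℕ) < MMc n j := by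
      have := (πstar x).isLt; simp only [MMc]; omega
    have hpi' : (πstar y : ℕ) < MMc n j := by
      have := (πstar y).isLt; simp only [MMc]; omega
    obtain ⟨h3, h4⟩ := digits_eq hpi hpi' h2
    exact πstar.injective (Fin.val_injective h4)
  · have hyNL : y ∈ NL S := by rw [mem_NL, mem_Lset]; exact hy'
    obtain ⟨i, hxi⟩ := hx
    rw [key_block hdisj hxi, key_nl hyNL] at h
    rw [add_assoc] at h
    have e : (MMc n j - 1) * MMc n j = (MMc n j - 1) * MMc n j + 0 := by ring
    rw [e] at h
    obtain ⟨h1, h2⟩ := digits_eq (block_tail_lt (πstar := πstar))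
      (by simpa using nl_tail_lt (n := n) (j := j)) h
    have hpi : (πstar x : ℕ) < MMc n j := by
      have := (πstar x).isLt; simp only [MMc]; omega
    obtain ⟨h3, _⟩ := digits_eq hpi hM2 h2
    have hij : (i : ℕ) < j := i.isLt
    exfalso
    simp only [MMc] at h3
    omega
  · have hxNL : x ∈ NL S := by rw [mem_NL, mem_Lset]; exact hx
    obtain ⟨i, hyi⟩ := hy'
    rw [key_nl hxNL, key_block hdisj hyi] at h
    rw [add_assoc] at h
    have e : (MMc n j - 1) * MMc n j = (MMc n j - 1) * MMc n j + 0 := by ring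
    rw [e] at h
    obtain ⟨h1, h2⟩ := digits_eq (by simpa using nl_tail_lt (n := n) (j := j))
      (block_tail_lt (πstar := πstar)) h
    have hpi : (πstar y : ℕ) < MMc n j := by
      have := (πstar y).isLt; simp only [MMc]; omega
    obtain ⟨h3, _⟩ := digits_eq hM2 hpi h2
    have hij : (i : ℕ) < j := i.isLt
    exfalso
    simp only [MMc] at h3
    omega
  · have hxNL : x ∈ NL S := by rw [mem_NL, mem_Lset]; exact hx
    have hyNL : y ∈ NL S := by rw [mem_NL, mem_Lset]; exact hy'
    rw [key_nl hxNL, key_nl hyNL] at h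
    have hr : rnk S τ x = rnk S τ y := by
      have h0 : (MMc n j - 1) * MMc n j < MMc n j ^ 2 := by
        have := nl_tail_lt (n := n) (j := j); omega
      exact (digits_eq h0 h0 h).1
    have : τ x = τ y := by
      have h1 := rnk_lt_rnk_iff (τ := τ) (x := y) hxNL
      have h2 := rnk_lt_rnk_iff (τ := τ) (x := x) hyNL
      by_contra hne
      rcases lt_or_gt_of_ne hne with hlt | hgt
      · have := h1.2 hlt; omega
      · have := h2.2 hgt; omega
    exact τ.injective this

end Dev4

section Dev5

variable {n j : ℕ} {πstar : Equiv.Perm (Fin n)} {S : Fin j → Finset (Fin n)} {a : Fin j → ℕ}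

variable (πstar S a) in
noncomputable def pos (τ : Equiv.Perm (Fin n)) (x : Fin n) : ℕ :=
  (Finset.univ.filter fun z => key πstar S a τ z < key πstar S a τ x).card

lemma pos_lt_n {τ : Equiv.Perm (Fin n)} (x : Fin n) : pos πstar S a τ x < n := by
  have hsub : (Finset.univ.filter fun z => key πstar S a τ z < key πstar S a τ x) ⊆
      Finset.univ.erase x := by
    intro z hz
    rw [mem_filter] at hz
    rw [Finset.mem_erase]
    exact ⟨fun he => by subst he; exact lt_irrefl _ hz.2, mem_univ _⟩
  calc pos πstar S a τ x ≤ (Finset.univ.erase x).card := Finset.card_le_card hsub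
    _ = n - 1 := by rw [Finset.card_erase_of_mem (mem_univ _), Finset.card_univ, Fintype.card_fin]
    _ < n := by
      have : 0 < n := Fin.pos x
      omega

lemma pos_lt_pos {τ : Equiv.Perm (Fin n)} {z x : Fin n}
    (h : key πstar S a τ z < key πstar S a τ x) :
    pos πstar S a τ z < pos πstar S a τ x := by
  apply Finset.card_lt_card
  constructor
  · intro w hw
    rw [mem_filter] at hw ⊢
    exact ⟨hw.1, lt_trans hw.2 h⟩
  · intro hsub
    have : z ∈ Finset.univ.filter fun w => key πstar S a τ w < key πstar S a τ x :=
      mem_filter.2 ⟨mem_univ _, h⟩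
    have h2 := hsub this
    rw [mem_filter] at h2
    exact absurd h2.2 (lt_irrefl _)

variable (πstar S a) in
noncomputable def fperm (hdisj : ∀ i₁ i₂ : Fin j, i₁ ≠ i₂ → Disjoint (S i₁) (S i₂))
    (τ : Equiv.Perm (Fin n)) : Equiv.Perm (Fin n) :=
  Equiv.ofBijective (fun x => (⟨pos πstar S a τ x, pos_lt_n x⟩ : Fin n))
    (Finite.injective_iff_bijective.1 (by
      intro x y hxy
      by_contra hne
      have hk : key πstar S a τ x ≠ key πstar S a τ y := fun he => hne (key_inj hdisj he)
      rcases lt_or_gt_of_ne hk with hlt | hgt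
      · have := pos_lt_pos hlt
        rw [Fin.mk.injEq] at hxy
        omega
      · have := pos_lt_pos hgt
        rw [Fin.mk.injEq] at hxy
        omega))

lemma fperm_apply (hdisj : ∀ i₁ i₂ : Fin j, i₁ ≠ i₂ → Disjoint (S i₁) (S i₂))
    {τ : Equiv.Perm (Fin n)} (x : Fin n) :
    (fperm πstar S a hdisj τ x : ℕ) = pos πstar S a τ x := rfl

lemma fperm_lt_iff (hdisj : ∀ i₁ i₂ : Fin j, i₁ ≠ i₂ → Disjoint (S i₁) (S i₂))
    {τ : Equiv.Perm (Fin n)} {z x : Fin n} :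
    fperm πstar S a hdisj τ z < fperm πstar S a hdisj τ x ↔
      key πstar S a τ z < key πstar S a τ x := by
  constructor
  · intro h
    by_contra hc
    push_neg at hc
    rcases eq_or_lt_of_le hc with he | hlt
    · have : z = x := key_inj hdisj he.symm
      subst this
      exact absurd h (lt_irrefl _)
    · have := pos_lt_pos hlt
      rw [Fin.lt_def] at h
      rw [fperm_apply hdisj z, fperm_apply hdisj x] at h
      omega
  · intro h
    rw [Fin.lt_def, fperm_apply hdisj z, fperm_apply hdisj x]
    exact pos_lt_pos h

end Dev5

section Dev6

variable {n j : ℕ} {πstar : Equiv.Perm (Fin n)} {S : Fin j → Finset (Fin n)} {a : Fin j → ℕ}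

variable (πstar S a) in
/-- The start of the key-decade reserved for block `i`. -/
noncomputable def ds (τ : Equiv.Perm (Fin n)) (i : Fin j) : ℕ :=
  kk πstar S a τ i * (MMc n j)^2 + ((i : ℕ)+1) * MMc n j

lemma ds_le_key_block (hdisj : ∀ i₁ i₂ : Fin j, i₁ ≠ i₂ → Disjoint (S i₁) (S i₂))
    {τ : Equiv.Perm (Fin n)} {i : Fin j} {x : Fin n} (hx : x ∈ S i) :
    ds πstar S a τ i ≤ key πstar S a τ x := by
  rw [key_block hdisj hx, ds]
  omega

lemma key_lt_ds_of_earlier (hdisj : ∀ i₁ i₂ : Fin j, i₁ ≠ i₂ → Disjoint (S i₁) (S i₂))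
    (ha2 : ∀ i₁ i₂ : Fin j, i₁ < i₂ → a i₁ + (S i₁).card ≤ a i₂)
    {τ : Equiv.Perm (Fin n)} {i'' i : Fin j} {z : Fin n} (hz : z ∈ S i'') (h : i'' < i) :
    key πstar S a τ z < ds πstar S a τ i := by
  rw [key_block hdisj hz, ds]
  have hkk : kk πstar S a τ i'' ≤ kk πstar S a τ i := kk_mono ha2 h.le
  have hmul := Nat.mul_le_mul_right ((MMc n j)^2) hkk
  have hpz : (πstar z : ℕ) < MMc n j := by
    have := (πstar z).isLt; simp only [MMc]; omega
  have hii : (i'' : ℕ) < (i : ℕ) := h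
  have htail : ((i'' : ℕ)+1) * MMc n j + (πstar z : ℕ) < ((i : ℕ)+1) * MMc n j + 0 :=
    digit_lt hpz (by omega)
  omega

lemma key_nl_lt_ds {τ : Equiv.Perm (Fin n)} {i : Fin j} {z : Fin n}
    (hz : z ∈ NL S) (h : rnk S τ z < kk πstar S a τ i) :
    key πstar S a τ z < ds πstar S a τ i := by
  rw [key_nl hz, ds]
  have h1 : rnk S τ z + 1 ≤ kk πstar S a τ i := h
  have hmul := Nat.mul_le_mul_right ((MMc n j)^2) h1
  have e : (rnk S τ z + 1) * (MMc n j)^2 = rnk S τ z * (MMc n j)^2 + (MMc n j)^2 := by ring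
  have h2 : (MMc n j - 1) * MMc n j < (MMc n j)^2 := by
    have := nl_tail_lt (n := n) (j := j); omega
  omega

lemma ds_mono (ha2 : ∀ i₁ i₂ : Fin j, i₁ < i₂ → a i₁ + (S i₁).card ≤ a i₂)
    {τ : Equiv.Perm (Fin n)} {i i' : Fin j} (h : i ≤ i') :
    ds πstar S a τ i ≤ ds πstar S a τ i' := by
  rw [ds, ds]
  have hkk : kk πstar S a τ i ≤ kk πstar S a τ i' := kk_mono ha2 h
  have hmul := Nat.mul_le_mul_right ((MMc n j)^2) hkk
  have hii : (i : ℕ) ≤ (i' : ℕ) := h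
  have := Nat.mul_le_mul_right (MMc n j) (show (i : ℕ) + 1 ≤ (i' : ℕ) + 1 by omega)
  omega

variable (πstar S a) in
noncomputable def aIdx (τ : Equiv.Perm (Fin n)) (i : Fin j) : ℕ :=
  (Finset.univ.filter fun z => key πstar S a τ z < ds πstar S a τ i).card

lemma pos_mem_of_block (hdisj : ∀ i₁ i₂ : Fin j, i₁ ≠ i₂ → Disjoint (S i₁) (S i₂))
    (ha1 : ∀ i, (S i).image (fun x => ((πstar x : ℕ))) = Finset.Ico (a i) (a i + (S i).card))
    (ha2 : ∀ i₁ i₂ : Fin j, i₁ < i₂ → a i₁ + (S i₁).card ≤ a i₂)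
    {τ : Equiv.Perm (Fin n)} {i : Fin j} {x : Fin n} (hx : x ∈ S i) :
    aIdx πstar S a τ i ≤ pos πstar S a τ x ∧
      pos πstar S a τ x < aIdx πstar S a τ i + (S i).card := by
  constructor
  · apply Finset.card_le_card
    intro z hz
    rw [mem_filter] at hz ⊢
    exact ⟨hz.1, lt_of_lt_of_le hz.2 (ds_le_key_block hdisj hx)⟩
  · have hsub : (Finset.univ.filter fun z => key πstar S a τ z < key πstar S a τ x) ⊆
        (Finset.univ.filter fun z => key πstar S a τ z < ds πstar S a τ i) ∪ (S i).erase x := by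
      intro z hz
      rw [mem_filter] at hz
      rw [Finset.mem_union, mem_filter, Finset.mem_erase]
      by_cases hzL : ∃ i'', z ∈ S i''
      · obtain ⟨i'', hzi⟩ := hzL
        by_cases hii : i'' = i
        · subst hii
          refine Or.inr ⟨fun he => ?_, hzi⟩
          subst he; exact absurd hz.2 (lt_irrefl _)
        · left
          refine ⟨mem_univ _, ?_⟩
          have hlt : i'' < i := by
            rcases lt_trichotomy i'' i with h1 | h1 | h1
            · exact h1
            · exact absurd h1 hii
            · exfalso
              have := key_lt_LL_of (τ := τ) (πstar := πstar) hdisj ha2 hx hzi h1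
              exact absurd (lt_trans hz.2 this) (lt_irrefl _)
          exact key_lt_ds_of_earlier hdisj ha2 hzi hlt
      · have hzNL : z ∈ NL S := by rw [mem_NL, mem_Lset]; exact hzL
        left
        refine ⟨mem_univ _, ?_⟩
        apply key_nl_lt_ds hzNL
        by_contra hc
        push_neg at hc
        have := key_lt_mixed_of hdisj hx hzNL hc
        exact absurd (lt_trans hz.2 this) (lt_irrefl _)
    calc pos πstar S a τ x ≤ _ := Finset.card_le_card hsub
      _ ≤ aIdx πstar S a τ i + ((S i).erase x).card := Finset.card_union_le _ _
      _ < aIdx πstar S a τ i + (S i).card := by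
          rw [Finset.card_erase_of_mem hx]
          have : 0 < (S i).card := Finset.card_pos.2 ⟨x, hx⟩
          omega

lemma fperm_sat (hdisj : ∀ i₁ i₂ : Fin j, i₁ ≠ i₂ → Disjoint (S i₁) (S i₂))
    (ha1 : ∀ i, (S i).image (fun x => ((πstar x : ℕ))) = Finset.Ico (a i) (a i + (S i).card))
    (ha2 : ∀ i₁ i₂ : Fin j, i₁ < i₂ → a i₁ + (S i₁).card ≤ a i₂)
    (τ : Equiv.Perm (Fin n)) :
    (∀ i, (S i).image (fun x => ((fperm πstar S a hdisj τ x : ℕ))) =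
      Finset.Ico (aIdx πstar S a τ i) (aIdx πstar S a τ i + (S i).card)) ∧
    (∀ i₁ i₂ : Fin j, i₁ < i₂ →
      aIdx πstar S a τ i₁ + (S i₁).card ≤ aIdx πstar S a τ i₂) := by
  constructor
  · intro i
    apply Finset.eq_of_subset_of_card_le
    · intro v hv
      rw [Finset.mem_image] at hv
      obtain ⟨x, hxS, hxe⟩ := hv
      rw [Finset.mem_Ico, ← hxe, fperm_apply hdisj x]
      exact pos_mem_of_block hdisj ha1 ha2 hxS
    · rw [Nat.card_Ico]
      have : aIdx πstar S a τ i + (S i).card - aIdx πstar S a τ i = (S i).card := by omega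
      rw [this]
      apply le_of_eq
      symm
      apply Finset.card_image_of_injOn
      intro x _ y _ he
      have : fperm πstar S a hdisj τ x = fperm πstar S a hdisj τ y := Fin.val_injective he
      exact (fperm πstar S a hdisj τ).injective this
  · intro i₁ i₂ h
    have hsub : (Finset.univ.filter fun z => key πstar S a τ z < ds πstar S a τ i₁) ∪ S i₁ ⊆
        (Finset.univ.filter fun z => key πstar S a τ z < ds πstar S a τ i₂) := by
      intro z hz
      rw [Finset.mem_union, mem_filter] at hz
      rw [mem_filter]
      refine ⟨mem_univ _, ?_⟩
      rcases hz with ⟨_, hz⟩ | hz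
      · exact lt_of_lt_of_le hz (ds_mono ha2 h.le)
      · exact key_lt_ds_of_earlier hdisj ha2 hz h
    have hdisj2 : Disjoint (Finset.univ.filter fun z => key πstar S a τ z < ds πstar S a τ i₁)
        (S i₁) := by
      apply Finset.disjoint_left.2
      intro z hz hz'
      rw [mem_filter] at hz
      exact absurd (lt_of_lt_of_le hz.2 (ds_le_key_block hdisj hz')) (lt_irrefl _)
    calc aIdx πstar S a τ i₁ + (S i₁).card
        = ((Finset.univ.filter fun z => key πstar S a τ z < ds πstar S a τ i₁) ∪ S i₁).card :=
          (Finset.card_union_of_disjoint hdisj2).symm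
      _ ≤ aIdx πstar S a τ i₂ := Finset.card_le_card hsub

end Dev6

lemma lt_iff_not_lt' {α} [LinearOrder α] {u v : α} (h : u ≠ v) : u < v ↔ ¬(v < u) :=
  ⟨fun h1 h2 => absurd h1 (asymm h2), fun h1 => (h.lt_or_gt).resolve_right h1⟩

section Dev7

variable {n j : ℕ} {πstar : Equiv.Perm (Fin n)} {S : Fin j → Finset (Fin n)} {a : Fin j → ℕ}

variable (πstar S) in
noncomputable def PairsQ (σ : Equiv.Perm (Fin n)) : Finset (Fin n × Fin n) :=
  Finset.univ.filter fun p : Fin n × Fin n =>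
    p.1 < p.2 ∧ ¬((πstar p.1 < πstar p.2) ↔ (σ p.1 < σ p.2))

lemma dKT_eq_pairsQ (σ : Equiv.Perm (Fin n)) : dKT πstar σ = (PairsQ πstar σ).card := rfl

lemma pairsQ_split (σ : Equiv.Perm (Fin n)) :
    (PairsQ πstar σ).card =
      ((PairsQ πstar σ).filter (fun p => p.1 ∈ Lset S ∧ p.2 ∈ Lset S)).card +
      ((PairsQ πstar σ).filter (fun p => p.1 ∉ Lset S ∧ p.2 ∉ Lset S)).card +
      ((PairsQ πstar σ).filter
        (fun p => ¬(p.1 ∈ Lset S ∧ p.2 ∈ Lset S) ∧ ¬(p.1 ∉ Lset S ∧ p.2 ∉ Lset S))).card := by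
  have h1 := Finset.card_filter_add_card_filter_not
    (s := PairsQ πstar σ) (p := fun p => p.1 ∈ Lset S ∧ p.2 ∈ Lset S)
  have h2 := Finset.card_filter_add_card_filter_not
    (s := (PairsQ πstar σ).filter (fun p => ¬(p.1 ∈ Lset S ∧ p.2 ∈ Lset S)))
    (p := fun p => p.1 ∉ Lset S ∧ p.2 ∉ Lset S)
  rw [Finset.filter_filter, Finset.filter_filter] at h2
  have e1 : (PairsQ πstar σ).filter
      (fun p => ¬(p.1 ∈ Lset S ∧ p.2 ∈ Lset S) ∧ (p.1 ∉ Lset S ∧ p.2 ∉ Lset S)) =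
      (PairsQ πstar σ).filter (fun p => p.1 ∉ Lset S ∧ p.2 ∉ Lset S) := by
    apply Finset.filter_congr
    intro p _
    constructor
    · tauto
    · tauto
  rw [e1] at h2
  omega

lemma cLL_fperm_empty (hdisj : ∀ i₁ i₂ : Fin j, i₁ ≠ i₂ → Disjoint (S i₁) (S i₂))
    (ha1 : ∀ i, (S i).image (fun x => ((πstar x : ℕ))) = Finset.Ico (a i) (a i + (S i).card))
    (ha2 : ∀ i₁ i₂ : Fin j, i₁ < i₂ → a i₁ + (S i₁).card ≤ a i₂)
    (τ : Equiv.Perm (Fin n)) :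
    (PairsQ πstar (fperm πstar S a hdisj τ)).filter
      (fun p => p.1 ∈ Lset S ∧ p.2 ∈ Lset S) = ∅ := by
  rw [Finset.filter_eq_empty_iff]
  intro p hp
  simp only [PairsQ, Finset.mem_filter, Finset.mem_univ, true_and] at hp
  rintro ⟨hL1, hL2⟩
  obtain ⟨i₁, hi₁⟩ := (mem_Lset S).1 hL1
  obtain ⟨i₂, hi₂⟩ := (mem_Lset S).1 hL2
  have hiff : fperm πstar S a hdisj τ p.1 < fperm πstar S a hdisj τ p.2 ↔ πstar p.1 < πstar p.2 := by
    rw [fperm_lt_iff hdisj]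
    exact key_lt_LL_iff hdisj ha1 ha2 hi₁ hi₂
  exact hp.2 (Iff.symm hiff)

lemma cNN_fperm_eq (hdisj : ∀ i₁ i₂ : Fin j, i₁ ≠ i₂ → Disjoint (S i₁) (S i₂))
    (τ : Equiv.Perm (Fin n)) :
    (PairsQ πstar (fperm πstar S a hdisj τ)).filter
      (fun p => p.1 ∉ Lset S ∧ p.2 ∉ Lset S) =
    (PairsQ πstar τ).filter (fun p => p.1 ∉ Lset S ∧ p.2 ∉ Lset S) := by
  simp only [PairsQ, Finset.filter_filter]
  apply Finset.filter_congr
  intro p _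
  constructor
  · rintro ⟨⟨hlt, hdisc⟩, hnl⟩
    refine ⟨⟨hlt, fun hiff => hdisc ?_⟩, hnl⟩
    rw [fperm_lt_iff hdisj, key_lt_nl_iff ((mem_NL S).2 hnl.1) ((mem_NL S).2 hnl.2)]
    exact hiff
  · rintro ⟨⟨hlt, hdisc⟩, hnl⟩
    refine ⟨⟨hlt, fun hiff => hdisc ?_⟩, hnl⟩
    rw [fperm_lt_iff hdisj, key_lt_nl_iff ((mem_NL S).2 hnl.1) ((mem_NL S).2 hnl.2)] at hiff
    exact hiff

variable (πstar S) in
noncomputable def mixSet (σ : Equiv.Perm (Fin n)) : Finset (Fin n × Fin n) :=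
  (Lset S ×ˢ NL S).filter fun q => ¬((πstar q.1 < πstar q.2) ↔ (σ q.1 < σ q.2))

lemma disc_symm {σ : Equiv.Perm (Fin n)} {x y : Fin n} (hxy : x ≠ y) :
    ¬((πstar x < πstar y) ↔ (σ x < σ y)) ↔ ¬((πstar y < πstar x) ↔ (σ y < σ x)) := by
  rw [lt_iff_not_lt' (fun he => hxy (πstar.injective he)),
    lt_iff_not_lt' (fun he => hxy (σ.injective he))]
  tauto

lemma cMix_eq_mixSet (σ : Equiv.Perm (Fin n)) :
    ((PairsQ πstar σ).filter
      (fun p => ¬(p.1 ∈ Lset S ∧ p.2 ∈ Lset S) ∧ ¬(p.1 ∉ Lset S ∧ p.2 ∉ Lset S))).card =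
    (mixSet πstar S σ).card := by
  refine Finset.card_bij' (fun p _ => if p.1 ∈ Lset S then p else p.swap)
    (fun q _ => if q.1 < q.2 then q else q.swap) ?hi ?hj ?left ?right
  case hi => -- maps into mixSet
    intro p hp
    simp only [PairsQ, Finset.mem_filter, Finset.mem_univ, true_and] at hp
    obtain ⟨⟨hlt, hdisc⟩, hm1, hm2⟩ := hp
    have hne : p.1 ≠ p.2 := ne_of_lt hlt
    by_cases h1 : p.1 ∈ Lset S
    · rw [if_pos h1]
      simp only [mixSet, Finset.mem_filter, Finset.mem_product]
      have h2 : p.2 ∉ Lset S := fun hc => hm1 ⟨h1, hc⟩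
      exact ⟨⟨h1, (mem_NL S).2 h2⟩, hdisc⟩
    · rw [if_neg h1]
      simp only [mixSet, Finset.mem_filter, Finset.mem_product, Prod.fst_swap, Prod.snd_swap]
      have h2 : p.2 ∈ Lset S := by
        by_contra hc
        exact hm2 ⟨h1, hc⟩
      refine ⟨⟨h2, (mem_NL S).2 h1⟩, ?_⟩
      exact (disc_symm hne).1 hdisc
  case hj => -- maps back into cMix
    intro q hq
    simp only [mixSet, Finset.mem_filter, Finset.mem_product] at hq
    obtain ⟨⟨hL, hNL⟩, hdisc⟩ := hq
    have hNL' := (mem_NL S).1 hNL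
    have hne : q.1 ≠ q.2 := fun he => hNL' (he ▸ hL)
    by_cases hlt : q.1 < q.2
    · rw [if_pos hlt]
      simp only [PairsQ, Finset.mem_filter, Finset.mem_univ, true_and]
      exact ⟨⟨hlt, hdisc⟩, fun hc => hNL' hc.2, fun hc => hc.1 hL⟩
    · rw [if_neg hlt]
      simp only [PairsQ, Finset.mem_filter, Finset.mem_univ, true_and, Prod.fst_swap,
        Prod.snd_swap]
      have hlt2 : q.2 < q.1 := (hne.lt_or_gt).resolve_left hlt
      exact ⟨⟨hlt2, (disc_symm hne).1 hdisc⟩, fun hc => hNL' hc.1, fun hc => hc.2 hL⟩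
  case left => -- left inverse
    intro p hp
    simp only [PairsQ, Finset.mem_filter, Finset.mem_univ, true_and] at hp
    obtain ⟨⟨hlt, _⟩, _, _⟩ := hp
    by_cases h1 : p.1 ∈ Lset S
    · simp only [if_pos h1, if_pos hlt]
    · rw [if_neg h1]
      have hns : ¬ (p.swap.1 < p.swap.2) := by
        simp only [Prod.fst_swap, Prod.snd_swap]
        exact fun hc => absurd (lt_trans hlt hc) (lt_irrefl _)
      rw [if_neg hns, Prod.swap_swap]
  case right => -- right inverse
    intro q hq
    simp only [mixSet, Finset.mem_filter, Finset.mem_product] at hq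
    obtain ⟨⟨hL, hNL⟩, _⟩ := hq
    have hNL' := (mem_NL S).1 hNL
    by_cases hlt : q.1 < q.2
    · rw [if_pos hlt, if_pos hL]
    · rw [if_neg hlt]
      have h1 : ¬ (q.swap.1 ∈ Lset S) := by
        simp only [Prod.fst_swap]
        exact hNL'
      rw [if_neg h1, Prod.swap_swap]

lemma mixSet_card_sum (σ : Equiv.Perm (Fin n)) :
    (mixSet πstar S σ).card =
      ∑ x ∈ Lset S, ((NL S).filter
        (fun y => ¬((πstar x < πstar y) ↔ (σ x < σ y)))).card := by
  simp only [mixSet]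
  rw [Finset.card_filter, Finset.sum_product]
  congr 1
  ext x
  rw [Finset.card_filter]

end Dev7

section Dev8

variable {n j : ℕ} {πstar : Equiv.Perm (Fin n)} {S : Fin j → Finset (Fin n)} {a : Fin j → ℕ}

lemma filter_disc_card (ha1 : ∀ i, (S i).image (fun x => ((πstar x : ℕ))) =
      Finset.Ico (a i) (a i + (S i).card))
    {σ : Equiv.Perm (Fin n)} {i : Fin j} {x : Fin n} (hx : x ∈ S i)
    {CC : Finset (Fin n)} (hCsub : CC ⊆ NL S)
    (hCC : ∀ y ∈ NL S, (σ x < σ y ↔ y ∉ CC)) :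
    ((NL S).filter (fun y => ¬((πstar x < πstar y) ↔ (σ x < σ y)))).card =
      (CC \ Bset πstar S a i).card + (Bset πstar S a i \ CC).card := by
  have hBsub : Bset πstar S a i ⊆ NL S := Finset.filter_subset _ _
  have hset : (NL S).filter (fun y => ¬((πstar x < πstar y) ↔ (σ x < σ y))) =
      (CC \ Bset πstar S a i) ∪ (Bset πstar S a i \ CC) := by
    ext y
    simp only [Finset.mem_filter, Finset.mem_union, Finset.mem_sdiff]
    constructor
    · rintro ⟨hyNL, hdisc⟩
      have hxy : x ≠ y := by
        intro he
        subst he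
        exact (mem_NL S).1 hyNL (block_subset_Lset S hx)
      have h1 : πstar x < πstar y ↔ ¬(πstar y < πstar x) :=
        lt_iff_not_lt' (fun he => hxy (πstar.injective he))
      have h2 := pi_lt_iff_Bset ha1 hx hyNL
      have h3 := hCC y hyNL
      rw [h1, h2, h3] at hdisc
      by_cases hyC : y ∈ CC <;> by_cases hyB : y ∈ Bset πstar S a i <;> tauto
    · intro h
      have hyNL : y ∈ NL S := by
        rcases h with ⟨h1, _⟩ | ⟨h1, _⟩
        · exact hCsub h1
        · exact hBsub h1
      refine ⟨hyNL, ?_⟩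
      have hxy : x ≠ y := by
        intro he
        subst he
        exact (mem_NL S).1 hyNL (block_subset_Lset S hx)
      have h1 : πstar x < πstar y ↔ ¬(πstar y < πstar x) :=
        lt_iff_not_lt' (fun he => hxy (πstar.injective he))
      have h2 := pi_lt_iff_Bset ha1 hx hyNL
      have h3 := hCC y hyNL
      rw [h1, h2, h3]
      tauto
  rw [hset, Finset.card_union_of_disjoint]
  apply Finset.disjoint_left.2
  intro y hy hy'
  rw [Finset.mem_sdiff] at hy hy'
  exact hy.2 hy'.1

lemma count_disc_tau (ha1 : ∀ i, (S i).image (fun x => ((πstar x : ℕ))) =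
      Finset.Ico (a i) (a i + (S i).card))
    {τ : Equiv.Perm (Fin n)} {i : Fin j} {x : Fin n} (hx : x ∈ S i) :
    ((NL S).filter (fun y => ¬((πstar x < πstar y) ↔ (τ x < τ y)))).card =
      mm πstar S a τ i (rnk S τ x) := by
  rw [mm]
  apply filter_disc_card ha1 hx (Finset.filter_subset _ _)
  intro y hyNL
  show τ x < τ y ↔ y ∉ Cset S τ (rnk S τ x)
  rw [mem_Cset_rnk hyNL]
  have hxy : x ≠ y := by
    intro he
    subst he
    exact (mem_NL S).1 hyNL (block_subset_Lset S hx)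
  rw [lt_iff_not_lt' (fun he => hxy (τ.injective he))]

lemma count_disc_fperm (hdisj : ∀ i₁ i₂ : Fin j, i₁ ≠ i₂ → Disjoint (S i₁) (S i₂))
    (ha1 : ∀ i, (S i).image (fun x => ((πstar x : ℕ))) =
      Finset.Ico (a i) (a i + (S i).card))
    {τ : Equiv.Perm (Fin n)} {i : Fin j} {x : Fin n} (hx : x ∈ S i) :
    ((NL S).filter (fun y =>
        ¬((πstar x < πstar y) ↔ (fperm πstar S a hdisj τ x < fperm πstar S a hdisj τ y)))).card =
      mm πstar S a τ i (kk πstar S a τ i) := by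
  rw [mm]
  apply filter_disc_card ha1 hx (Finset.filter_subset _ _)
  intro y hyNL
  show _ ↔ y ∉ Cset S τ (kk πstar S a τ i)
  rw [fperm_lt_iff hdisj, key_lt_mixed_iff hdisj hx hyNL, mem_Cset]
  constructor
  · intro h hc
    omega
  · intro h
    by_contra hc
    push_neg at hc
    exact h ⟨hyNL, hc⟩

lemma dKT_fperm_le (hdisj : ∀ i₁ i₂ : Fin j, i₁ ≠ i₂ → Disjoint (S i₁) (S i₂))
    (ha1 : ∀ i, (S i).image (fun x => ((πstar x : ℕ))) = Finset.Ico (a i) (a i + (S i).card))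
    (ha2 : ∀ i₁ i₂ : Fin j, i₁ < i₂ → a i₁ + (S i₁).card ≤ a i₂)
    (τ : Equiv.Perm (Fin n)) :
    dKT πstar (fperm πstar S a hdisj τ) ≤ dKT πstar τ := by
  rw [dKT_eq_pairsQ, dKT_eq_pairsQ, pairsQ_split (S := S) (πstar := πstar),
    pairsQ_split (S := S) (πstar := πstar)]
  have hLL : ((PairsQ πstar (fperm πstar S a hdisj τ)).filter
      (fun p => p.1 ∈ Lset S ∧ p.2 ∈ Lset S)).card = 0 := by
    rw [cLL_fperm_empty hdisj ha1 ha2 τ, Finset.card_empty]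
  have hNN : ((PairsQ πstar (fperm πstar S a hdisj τ)).filter
      (fun p => p.1 ∉ Lset S ∧ p.2 ∉ Lset S)).card =
      ((PairsQ πstar τ).filter (fun p => p.1 ∉ Lset S ∧ p.2 ∉ Lset S)).card := by
    rw [cNN_fperm_eq hdisj]
  have hdisjPW : (↑(Finset.univ : Finset (Fin j)) : Set (Fin j)).PairwiseDisjoint S :=
    fun i _ i' _ hne => hdisj i i' hne
  have hMix : ((PairsQ πstar (fperm πstar S a hdisj τ)).filter
      (fun p => ¬(p.1 ∈ Lset S ∧ p.2 ∈ Lset S) ∧ ¬(p.1 ∉ Lset S ∧ p.2 ∉ Lset S))).card ≤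
      ((PairsQ πstar τ).filter
      (fun p => ¬(p.1 ∈ Lset S ∧ p.2 ∈ Lset S) ∧ ¬(p.1 ∉ Lset S ∧ p.2 ∉ Lset S))).card := by
    rw [cMix_eq_mixSet (S := S), cMix_eq_mixSet (S := S), mixSet_card_sum, mixSet_card_sum]
    rw [Lset, Finset.sum_biUnion hdisjPW, Finset.sum_biUnion hdisjPW]
    apply Finset.sum_le_sum
    intro i _
    apply Finset.sum_le_sum
    intro x hx
    rw [count_disc_fperm hdisj ha1 hx, count_disc_tau ha1 hx]
    exact kk_spec _ rnk_le
  omega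

end Dev8

lemma order_rigid {α β : Type*} [DecidableEq α] [DecidableEq β] [LinearOrder β] (g h : α → β)
    (s : Finset α) : Set.InjOn g s → Set.InjOn h s → s.image g = s.image h →
      (∀ x ∈ s, ∀ y ∈ s, (g x < g y ↔ h x < h y)) → ∀ x ∈ s, g x = h x := by
  induction s using Finset.strongInduction with
  | _ s ih =>
    intro hg hh himg hord x hx
    have hne : s.Nonempty := ⟨x, hx⟩
    have hv : (s.image g).Nonempty := hne.image g
    obtain ⟨x₀, hx₀, hgx₀⟩ := Finset.mem_image.1 (Finset.min'_mem _ hv)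
    have hmin_g : ∀ y ∈ s, g x₀ ≤ g y := by
      intro y hy
      rw [hgx₀]
      exact Finset.min'_le _ _ (Finset.mem_image_of_mem g hy)
    have hmin_h : ∀ y ∈ s, h x₀ ≤ h y := by
      intro y hy
      by_contra hc
      push_neg at hc
      have h1 : g y < g x₀ := (hord y hy x₀ hx₀).2 hc
      exact absurd (lt_of_lt_of_le h1 (hmin_g y hy)) (lt_irrefl _)
    have heq : g x₀ = h x₀ := by
      apply le_antisymm
      · have hmem : h x₀ ∈ s.image g := by
          rw [himg]
          exact Finset.mem_image_of_mem h hx₀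
        obtain ⟨y, hy, hyv⟩ := Finset.mem_image.1 hmem
        rw [← hyv]
        exact hmin_g y hy
      · have hmem : g x₀ ∈ s.image h := by
          rw [← himg]
          exact Finset.mem_image_of_mem g hx₀
        obtain ⟨y, hy, hyv⟩ := Finset.mem_image.1 hmem
        rw [← hyv]
        exact hmin_h y hy
    by_cases hxx : x = x₀
    · rw [hxx, heq]
    · have hsub : s.erase x₀ ⊂ s := Finset.erase_ssubset hx₀
      apply ih _ hsub (hg.mono (Finset.coe_subset.2 (Finset.erase_subset _ _)))
        (hh.mono (Finset.coe_subset.2 (Finset.erase_subset _ _)))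
      · -- images of erased sets agree
        have e1 : (s.erase x₀).image g = (s.image g).erase (g x₀) := by
          ext v
          simp only [Finset.mem_image, Finset.mem_erase]
          constructor
          · rintro ⟨y, ⟨hyne, hy⟩, hyv⟩
            exact ⟨fun hc => hyne (hg hy hx₀ (by rw [hyv, hc])), ⟨y, hy, hyv⟩⟩
          · rintro ⟨hvne, y, hy, hyv⟩
            exact ⟨y, ⟨fun hc => hvne (by rw [← hyv, hc]), hy⟩, hyv⟩
        have e2 : (s.erase x₀).image h = (s.image h).erase (h x₀) := by
          ext v
          simp only [Finset.mem_image, Finset.mem_erase]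
          constructor
          · rintro ⟨y, ⟨hyne, hy⟩, hyv⟩
            exact ⟨fun hc => hyne (hh hy hx₀ (by rw [hyv, hc])), ⟨y, hy, hyv⟩⟩
          · rintro ⟨hvne, y, hy, hyv⟩
            exact ⟨y, ⟨fun hc => hvne (by rw [← hyv, hc]), hy⟩, hyv⟩
        rw [e1, e2, himg, heq]
      · intro u hu v hv
        exact hord u (Finset.mem_of_mem_erase hu) v (Finset.mem_of_mem_erase hv)
      · exact Finset.mem_erase.2 ⟨hxx, hx⟩

section Dev9

variable {n j : ℕ} {πstar : Equiv.Perm (Fin n)} {S : Fin j → Finset (Fin n)} {a : Fin j → ℕ}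

lemma image_NL_eq (τ : Equiv.Perm (Fin n)) :
    (NL S).image (fun x => τ x) = Finset.univ \ (Lset S).image (fun x => τ x) := by
  ext b
  simp only [Finset.mem_image, Finset.mem_sdiff, Finset.mem_univ, true_and]
  constructor
  · rintro ⟨y, hy, hyb⟩
    rintro ⟨z, hz, hzb⟩
    have : z = y := τ.injective (by rw [hyb, hzb])
    subst this
    exact (mem_NL S).1 hy hz
  · intro hb
    refine ⟨τ.symm b, ?_, by simp⟩
    rw [mem_NL]
    intro hc
    exact hb ⟨τ.symm b, hc, by simp⟩

lemma fperm_injective (hdisj : ∀ i₁ i₂ : Fin j, i₁ ≠ i₂ → Disjoint (S i₁) (S i₂))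
    {τ τ' : Equiv.Perm (Fin n)} (hL : ∀ x ∈ Lset S, τ x = τ' x)
    (hf : fperm πstar S a hdisj τ = fperm πstar S a hdisj τ') : τ = τ' := by
  have hNL : ∀ x ∈ NL S, τ x = τ' x := by
    apply order_rigid (fun x => τ x) (fun x => τ' x) (NL S)
    · intro u _ v _ he
      exact τ.injective he
    · intro u _ v _ he
      exact τ'.injective he
    · rw [image_NL_eq, image_NL_eq]
      congr 1
      apply Finset.image_congr
      intro x hx
      exact hL x hx
    · intro x hx y hy
      rw [← key_lt_nl_iff (πstar := πstar) (a := a) (τ := τ) hx hy,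
        ← fperm_lt_iff hdisj, hf, fperm_lt_iff hdisj,
        key_lt_nl_iff (πstar := πstar) (a := a) (τ := τ') hx hy]
  apply Equiv.ext
  intro x
  by_cases hx : x ∈ Lset S
  · exact hL x hx
  · exact hNL x ((mem_NL S).2 hx)

lemma fiber_card_le (hdisj : ∀ i₁ i₂ : Fin j, i₁ ≠ i₂ → Disjoint (S i₁) (S i₂))
    (σ' : Equiv.Perm (Fin n)) :
    ((Finset.univ : Finset (Equiv.Perm (Fin n))).filter
      (fun τ => fperm πstar S a hdisj τ = σ')).card ≤ n ^ (Lset S).card := by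
  calc ((Finset.univ : Finset (Equiv.Perm (Fin n))).filter
      (fun τ => fperm πstar S a hdisj τ = σ')).card
      ≤ (Finset.univ : Finset ({x // x ∈ Lset S} → Fin n)).card := by
        apply Finset.card_le_card_of_injOn
          (fun (τ : Equiv.Perm (Fin n)) => (fun x : {x // x ∈ Lset S} => τ x.1))
          (fun τ _ => Finset.mem_univ _)
        intro τ hτ τ' hτ' he
        rw [Finset.coe_filter, Set.mem_setOf_eq] at hτ hτ'
        apply fperm_injective hdisj _ (hτ.2.trans hτ'.2.symm)
        intro x hx
        exact congrFun he ⟨x, hx⟩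
    _ = n ^ (Lset S).card := by
        rw [Finset.card_univ, Fintype.card_fun, Fintype.card_fin, Fintype.card_coe]

lemma Lset_card : (∀ i₁ i₂ : Fin j, i₁ ≠ i₂ → Disjoint (S i₁) (S i₂)) →
    (Lset S).card = ∑ i, (S i).card := by
  intro hdisj
  rw [Lset]
  exact Finset.card_biUnion (fun i _ i' _ hne => hdisj i i' hne)

end Dev9


open scoped Classical in
/-- **Lemma 3.3 of Liu–Moitra.** For a Mallows model `M(φ, π*)` with `0 ≤ φ ≤ 1` and a
block structure `B = (S_1, …, S_j)` of pairwise disjoint subsets with total size `ℓ`,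
if `π*` satisfies `B` then the probability that a sample from `M(φ, π*)` satisfies `B`
is at least `1/n^{2ℓ}`. -/
theorem block_probability_lower_bound (n j : ℕ) (φ : ℝ) (hφ0 : 0 ≤ φ) (hφ1 : φ ≤ 1)
    (S : Fin j → Finset (Fin n))
    (hdisj : ∀ i₁ i₂ : Fin j, i₁ ≠ i₂ → Disjoint (S i₁) (S i₂))
    (πstar : Equiv.Perm (Fin n)) (hsat : satisfiesBlock πstar S) :
    (1 : ℝ) / (n : ℝ) ^ (2 * ∑ i, (S i).card) ≤
      ∑ σ : Equiv.Perm (Fin n),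
        if satisfiesBlock σ S then mallows φ πstar σ else 0 := by
  obtain ⟨a, ha1, ha2⟩ := hsat
  have hterm : ∀ σ : Equiv.Perm (Fin n), 0 ≤ φ ^ dKT πstar σ := fun σ => pow_nonneg hφ0 _
  have hd0 : dKT πstar πstar = 0 := by
    rw [dKT, Finset.card_eq_zero, Finset.filter_eq_empty_iff]
    intro p _
    rintro ⟨-, hne⟩
    exact hne Iff.rfl
  set Z : ℝ := ∑ τ : Equiv.Perm (Fin n), φ ^ dKT πstar τ with hZ
  have hZ1 : (1:ℝ) ≤ Z := by
    calc (1:ℝ) = φ ^ dKT πstar πstar := by rw [hd0, pow_zero]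
    _ ≤ Z := Finset.single_le_sum (fun σ _ => hterm σ) (Finset.mem_univ πstar)
  have hZpos : (0:ℝ) < Z := lt_of_lt_of_le one_pos hZ1
  set ZB : ℝ := ∑ σ : Equiv.Perm (Fin n),
    if satisfiesBlock σ S then φ ^ dKT πstar σ else 0 with hZB
  have hsum : (∑ σ : Equiv.Perm (Fin n), if satisfiesBlock σ S then mallows φ πstar σ else 0)
      = ZB / Z := by
    rw [hZB, Finset.sum_div]
    apply Finset.sum_congr rfl
    intro σ _
    rw [mallows, ← hZ]
    split
    · rfl
    · rw [zero_div]
  have hZB1 : (1:ℝ) ≤ ZB := by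
    have h0 := Finset.single_le_sum
      (f := fun σ : Equiv.Perm (Fin n) => if satisfiesBlock σ S then φ ^ dKT πstar σ else 0)
      (fun σ _ => by
        split
        · exact hterm σ
        · exact le_refl 0)
      (Finset.mem_univ πstar)
    rw [if_pos ⟨a, ha1, ha2⟩, hd0, pow_zero] at h0
    exact h0
  have hZBpos : (0:ℝ) < ZB := lt_of_lt_of_le one_pos hZB1
  -- ZB as a sum over the filtered set
  have hZBf : ZB = ∑ σ' ∈ Finset.univ.filter (fun σ' => satisfiesBlock σ' S),
      φ ^ dKT πstar σ' := by
    rw [hZB, Finset.sum_filter]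
  -- the counting step
  have hkey : Z ≤ ((n : ℝ) ^ (Lset S).card) * ZB := by
    have step1 : Z ≤ ∑ τ : Equiv.Perm (Fin n), φ ^ dKT πstar (fperm πstar S a hdisj τ) := by
      apply Finset.sum_le_sum
      intro τ _
      exact pow_le_pow_of_le_one hφ0 hφ1 (dKT_fperm_le hdisj ha1 ha2 τ)
    have hmapsto : ∀ τ ∈ (Finset.univ : Finset (Equiv.Perm (Fin n))),
        fperm πstar S a hdisj τ ∈ Finset.univ.filter (fun σ' => satisfiesBlock σ' S) := by
      intro τ _
      rw [Finset.mem_filter]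
      exact ⟨Finset.mem_univ _,
        ⟨aIdx πstar S a τ, (fperm_sat hdisj ha1 ha2 τ).1, (fperm_sat hdisj ha1 ha2 τ).2⟩⟩
    have step2 : ∑ τ : Equiv.Perm (Fin n), φ ^ dKT πstar (fperm πstar S a hdisj τ)
        = ∑ σ' ∈ Finset.univ.filter (fun σ' => satisfiesBlock σ' S),
            ∑ _τ ∈ Finset.univ.filter (fun τ => fperm πstar S a hdisj τ = σ'),
              φ ^ dKT πstar σ' := by
      rw [Finset.sum_fiberwise_of_maps_to' hmapsto (fun σ' => φ ^ dKT πstar σ')]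
    have step3 : ∑ σ' ∈ Finset.univ.filter (fun σ' => satisfiesBlock σ' S),
            ∑ _τ ∈ Finset.univ.filter (fun τ => fperm πstar S a hdisj τ = σ'),
              φ ^ dKT πstar σ'
        ≤ ∑ σ' ∈ Finset.univ.filter (fun σ' => satisfiesBlock σ' S),
            ((n : ℝ) ^ (Lset S).card) * (φ ^ dKT πstar σ') := by
      apply Finset.sum_le_sum
      intro σ' _
      rw [Finset.sum_const, nsmul_eq_mul]
      apply mul_le_mul_of_nonneg_right _ (hterm σ')
      have hc := fiber_card_le (πstar := πstar) (a := a) hdisj σ'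
      calc ((Finset.univ.filter (fun τ => fperm πstar S a hdisj τ = σ')).card : ℝ)
          ≤ ((n ^ (Lset S).card : ℕ) : ℝ) := by exact_mod_cast hc
        _ = (n : ℝ) ^ (Lset S).card := by push_cast; ring
    calc Z ≤ _ := step1
      _ = _ := step2
      _ ≤ _ := step3
      _ = ((n : ℝ) ^ (Lset S).card) * ZB := by rw [hZBf, ← Finset.mul_sum]
  have hcard : (Lset S).card = ∑ i, (S i).card := Lset_card hdisj
  have hpow : ((n:ℝ) ^ (Lset S).card) ≤ (n:ℝ) ^ (2 * ∑ i, (S i).card) := by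
    rcases Nat.eq_zero_or_pos n with hn | hn
    · have h1 : (Lset S).card ≤ n := by simpa using Finset.card_le_univ (Lset S)
      have hs0 : (∑ i, (S i).card) = 0 := by omega
      have hc0 : (Lset S).card = 0 := by omega
      rw [hs0, hc0]
    · apply pow_le_pow_right₀ (Nat.one_le_cast.mpr hn)
      omega
  have hP : Z ≤ (n:ℝ) ^ (2 * ∑ i, (S i).card) * ZB :=
    le_trans hkey (mul_le_mul_of_nonneg_right hpow hZBpos.le)
  have hPpos : (0:ℝ) < (n:ℝ) ^ (2 * ∑ i, (S i).card) := by
    by_contra hc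
    push_neg at hc
    nlinarith
  rw [hsum, div_le_div_iff₀ hPpos hZpos, one_mul]
  nlinarith
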